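/- Suppose d_ij < 0, d_ik < 0, and d_ji, d_jk, d_ki, d_kj > 0 are nonzero reals satisfying sinh d_ij · sinh d_jk · sinh d_ki = sinh d_ji · sinh d_kj · sinh d_ik. Then the determinant of Q₂ = [[0, coth d_jk, coth d_kj],[coth d_ik, 0, coth d_ki],[coth d_ij, coth d_ji, 0]] satisfies det Q₂ = (cosh d_jk cosh d_ki cosh d_ij + cosh d_kj cosh d_ik cosh d_ji)/(sinh d_ij sinh d_jk sinh d_ki) < 0. -/

import Mathlib

open Real

/-- `coth x = cosh x / sinh x`. -/
noncomputable def coth (x : ℝ) : ℝ := Real.cosh x / Real.sinh x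

/-- Under the compatibility condition with `d_ij, d_ik < 0` and the other `d`'s positive,
`det Q₂ = (cosh d_jk cosh d_ki cosh d_ij + cosh d_kj cosh d_ik cosh d_ji)
  /(sinh d_ij sinh d_jk sinh d_ki) < 0`. -/
theorem detQ2_mixed_neg (dij djk dki dji dkj dik : ℝ)
    (h1 : dij < 0) (h2 : dik < 0)
    (h3 : 0 < dji) (h4 : 0 < djk) (h5 : 0 < dki) (h6 : 0 < dkj)
    (hcompat : Real.sinh dij * Real.sinh djk * Real.sinh dki
      = Real.sinh dji * Real.sinh dkj * Real.sinh dik) :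
    (!![(0 : ℝ), coth djk, coth dkj;
        coth dik, 0, coth dki;
        coth dij, coth dji, 0]).det
      = (Real.cosh djk * Real.cosh dki * Real.cosh dij
          + Real.cosh dkj * Real.cosh dik * Real.cosh dji)
        / (Real.sinh dij * Real.sinh djk * Real.sinh dki) ∧
    (!![(0 : ℝ), coth djk, coth dkj;
        coth dik, 0, coth dki;
        coth dij, coth dji, 0]).det < 0 := by
  have s1 : Real.sinh dij < 0 := Real.sinh_neg_iff.mpr h1
  have s2 : Real.sinh dik < 0 := Real.sinh_neg_iff.mpr h2
  have s3 : 0 < Real.sinh dji := Real.sinh_pos_iff.mpr h3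
  have s4 : 0 < Real.sinh djk := Real.sinh_pos_iff.mpr h4
  have s5 : 0 < Real.sinh dki := Real.sinh_pos_iff.mpr h5
  have s6 : 0 < Real.sinh dkj := Real.sinh_pos_iff.mpr h6
  have heq : (!![(0 : ℝ), coth djk, coth dkj;
        coth dik, 0, coth dki;
        coth dij, coth dji, 0]).det
      = (Real.cosh djk * Real.cosh dki * Real.cosh dij
          + Real.cosh dkj * Real.cosh dik * Real.cosh dji)
        / (Real.sinh dij * Real.sinh djk * Real.sinh dki) := by
    have hden : Real.sinh dkj * Real.sinh dik * Real.sinh dji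
        = Real.sinh dij * Real.sinh djk * Real.sinh dki := by linear_combination -hcompat
    simp [Matrix.det_fin_three, coth]
    rw [div_mul_div_comm, div_mul_div_comm, div_mul_div_comm, div_mul_div_comm,
      show Real.sinh djk * Real.sinh dki * Real.sinh dij
        = Real.sinh dij * Real.sinh djk * Real.sinh dki from by ring, hden, ← add_div]
  refine ⟨heq, ?_⟩
  rw [heq]
  apply div_neg_of_pos_of_neg
  · positivity
  · exact mul_neg_of_neg_of_pos (mul_neg_of_neg_of_pos s1 s4) s5
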